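/- Every quasicontinuous dcpo has weak one-step closure: for every subset A of a quasicontinuous dcpo L, the Scott closure of A equals A'' = {x ∈ L : there exists a directed subset D of ↓A with x ≤ sup D}. -/

import Mathlib

open Set

section OrderDefs

variable {L : Type*} [Preorder L]

/-- Downward closure `↓A`. -/
def dw (A : Set L) : Set L := {x | ∃ a ∈ A, x ≤ a}

/-- Upward closure `↑A`. -/
def up (A : Set L) : Set L := {x | ∃ a ∈ A, a ≤ x}

/-- Scott closure of a set. -/
def scottCl (A : Set L) : Set L := @closure L (Topology.scott L Set.univ) A

/-- `A' = {x : ∃ directed D ⊆ ↓A with x = sup D}`. -/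
def oneStep (A : Set L) : Set L :=
  {x | ∃ D : Set L, D ⊆ dw A ∧ D.Nonempty ∧ DirectedOn (· ≤ ·) D ∧ IsLUB D x}

/-- `A'' = {x : ∃ directed D ⊆ ↓A with x ≤ sup D}`. -/
def weakOneStep (A : Set L) : Set L :=
  {x | ∃ D : Set L, D ⊆ dw A ∧ D.Nonempty ∧ DirectedOn (· ≤ ·) D ∧ ∃ y, IsLUB D y ∧ x ≤ y}

/-- A poset has one-step closure if `cl(A) = A'` for all `A`. -/
def HasOneStepClosure (L : Type*) [Preorder L] : Prop :=
  ∀ A : Set L, scottCl A = oneStep A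

/-- A poset has weak one-step closure if `cl(A) = A''` for all `A`. -/
def HasWeakOneStepClosure (L : Type*) [Preorder L] : Prop :=
  ∀ A : Set L, scottCl A = weakOneStep A

/-- Meet continuity: `x ≤ sup D` implies `x ∈ cl(↓D ∩ ↓x)`. -/
def MeetContinuous (L : Type*) [Preorder L] : Prop :=
  ∀ x : L, ∀ D : Set L, D.Nonempty → DirectedOn (· ≤ ·) D → ∀ s, IsLUB D s → x ≤ s →
    x ∈ scottCl (dw D ∩ dw ({x} : Set L))

/-- The way-below relation `x ≪ y`. -/
def wayBelow (x y : L) : Prop :=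
  ∀ D : Set L, D.Nonempty → DirectedOn (· ≤ ·) D → ∀ s, IsLUB D s → y ≤ s →
    (D ∩ up ({x} : Set L)).Nonempty

/-- The weakly way-below relation `x ≪_w y`. -/
def weaklyWayBelow (x y : L) : Prop :=
  ∀ D : Set L, D.Nonempty → DirectedOn (· ≤ ·) D → IsLUB D y →
    (D ∩ up ({x} : Set L)).Nonempty

/-- A continuous poset: each `⇓x` is directed with supremum `x`. -/
def ContinuousPoset (L : Type*) [Preorder L] : Prop :=
  ∀ x : L, {y | wayBelow y x}.Nonempty ∧ DirectedOn (· ≤ ·) {y | wayBelow y x} ∧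
    IsLUB {y | wayBelow y x} x

/-- An exact poset: each `⇓_w x` is directed with supremum `x`. -/
def ExactPoset (L : Type*) [Preorder L] : Prop :=
  ∀ x : L, {y | weaklyWayBelow y x}.Nonempty ∧ DirectedOn (· ≤ ·) {y | weaklyWayBelow y x} ∧
    IsLUB {y | weaklyWayBelow y x} x

/-- `F ≪ x` for a set `F`: every directed `D` with `sup D ≥ x` meets `↑F`. -/
def finWayBelow (F : Set L) (x : L) : Prop :=
  ∀ D : Set L, D.Nonempty → DirectedOn (· ≤ ·) D → ∀ s, IsLUB D s → x ≤ s →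
    (D ∩ up F).Nonempty

/-- A quasicontinuous poset: each `fin(x)` is a directed family (Smyth preorder)
with `↑x = ⋂_{F ∈ fin(x)} ↑F`. -/
def QuasicontinuousPoset (L : Type*) [Preorder L] : Prop :=
  ∀ x : L, {F : Set L | F.Finite ∧ finWayBelow F x}.Nonempty ∧
    DirectedOn (fun F G => up G ⊆ up F) {F : Set L | F.Finite ∧ finWayBelow F x} ∧
    up ({x} : Set L) = ⋂ F ∈ {F : Set L | F.Finite ∧ finWayBelow F x}, up F

/-- A dcpo: every (nonempty) directed subset has a least upper bound. -/
def IsDcpo (L : Type*) [Preorder L] : Prop :=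
  ∀ D : Set L, D.Nonempty → DirectedOn (· ≤ ·) D → ∃ x, IsLUB D x

end OrderDefs


section Aux

open Set

variable {L : Type*} [Preorder L]

lemma subset_up' (A : Set L) : A ⊆ up A := fun a ha => ⟨a, ha, le_refl a⟩

lemma up_mono' {A B : Set L} (h : A ⊆ B) : up A ⊆ up B :=
  fun _ ⟨a, ha, hax⟩ => ⟨a, h ha, hax⟩

lemma directedOn_singleton' (a : L) : DirectedOn (· ≤ ·) ({a} : Set L) := by
  intro x hx y hy
  rw [Set.mem_singleton_iff] at hx hy
  exact ⟨a, rfl, le_of_eq hx, le_of_eq hy⟩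

/-- Rudin's lemma (variant): a Smyth-directed family of nonempty finite sets admits a
directed set contained in its union that meets the up-closure of every member. -/
lemma rudin {𝔉 : Set (Set L)} (hne : 𝔉.Nonempty)
    (hF : ∀ F ∈ 𝔉, F.Finite ∧ F.Nonempty)
    (hdir : DirectedOn (fun F G => up G ⊆ up F) 𝔉) :
    ∃ D : Set L, D ⊆ ⋃₀ 𝔉 ∧ D.Nonempty ∧ DirectedOn (· ≤ ·) D ∧
      ∀ F ∈ 𝔉, (D ∩ up F).Nonempty := by
  classical
  set U : Set L := ⋃₀ 𝔉 with hU
  set S : Set (Set L) :=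
    {E | E ⊆ U ∧ (∀ x ∈ E, ∀ y ∈ U, y ≤ x → y ∈ E) ∧ ∀ F ∈ 𝔉, (E ∩ F).Nonempty} with hS
  have hUS : U ∈ S := by
    refine ⟨Subset.rfl, fun x _ y hy _ => hy, fun F hF' => ?_⟩
    obtain ⟨f, hf⟩ := (hF F hF').2
    exact ⟨f, ⟨F, hF', hf⟩, hf⟩
  -- Zorn's lemma: minimal element of S
  have hchaincond : ∀ c ⊆ S, IsChain (· ⊆ ·) c → c.Nonempty →
      ∃ lb ∈ S, ∀ s ∈ c, lb ⊆ s := by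
    intro c hcS hchain hcne
    refine ⟨⋂₀ c, ⟨?_, ?_, ?_⟩, fun s hs => sInter_subset_of_mem hs⟩
    · obtain ⟨E₀, hE₀⟩ := hcne
      exact (sInter_subset_of_mem hE₀).trans (hcS hE₀).1
    · intro x hx y hy hyx
      intro E' hE'
      exact (hcS hE').2.1 x (hx E' hE') y hy hyx
    · intro F hF'
      have hFfin := (hF F hF').1
      have himfin : ((fun E => E ∩ F) '' c).Finite := by
        apply Set.Finite.subset hFfin.finite_subsets
        rintro _ ⟨E', -, rfl⟩
        exact inter_subset_right
      obtain ⟨E₀, hE₀c, hE₀min⟩ :=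
        Set.Finite.exists_minimalFor' (fun E => E ∩ F) c himfin hcne
      have hleast : ∀ E' ∈ c, E₀ ∩ F ⊆ E' ∩ F := by
        intro E' hE'
        rcases hchain.total hE₀c hE' with h | h
        · exact inter_subset_inter_left F h
        · exact hE₀min hE' (inter_subset_inter_left F h)
      obtain ⟨x, hxE₀, hxF⟩ := (hcS hE₀c).2.2 F hF'
      refine ⟨x, ?_, hxF⟩
      intro E' hE'
      exact (hleast E' hE' ⟨hxE₀, hxF⟩).1
  obtain ⟨E, -, hmin⟩ := zorn_superset_nonempty S hchaincond U hUS
  have hES : E ∈ S := hmin.1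
  have hEmin : ∀ E' ∈ S, E' ⊆ E → E ⊆ E' := fun E' h1 h2 => hmin.2 h1 h2
  obtain ⟨hEU, hElow, hEhit⟩ := hES
  -- key claim: every point of E is eventually below E ∩ F
  have key : ∀ x ∈ E, ∃ F ∈ 𝔉, ∀ z ∈ E ∩ F, x ≤ z := by
    intro x hx
    by_contra hcon
    push_neg at hcon
    have hE' : {z ∈ E | ¬ x ≤ z} ∈ S := by
      refine ⟨fun z hz => hEU hz.1, ?_, ?_⟩
      · intro z hz y hy hyz
        exact ⟨hElow z hz.1 y hy hyz, fun hxy => hz.2 (hxy.trans hyz)⟩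
      · intro F hF'
        obtain ⟨z, ⟨hzE, hzF⟩, hxz⟩ := hcon F hF'
        exact ⟨z, ⟨hzE, hxz⟩, hzF⟩
    have := hEmin _ hE' (fun z hz => hz.1) hx
    exact this.2 (le_refl x)
  -- conclusion
  obtain ⟨F₀, hF₀⟩ := hne
  obtain ⟨x₀, hx₀⟩ := hEhit F₀ hF₀
  refine ⟨E, hEU, ⟨x₀, hx₀.1⟩, ?_, fun F hF' => ?_⟩
  · intro x hx y hy
    obtain ⟨Fx, hFx, hFxkey⟩ := key x hx
    obtain ⟨Fy, hFy, hFykey⟩ := key y hy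
    obtain ⟨G, hG, hGx, hGy⟩ := hdir Fx hFx Fy hFy
    obtain ⟨z, hzE, hzG⟩ := hEhit G hG
    obtain ⟨ax, haxFx, haxz⟩ := hGx (subset_up' G hzG)
    obtain ⟨ay, hayFy, hayz⟩ := hGy (subset_up' G hzG)
    have haxE : ax ∈ E := hElow z hzE ax ⟨Fx, hFx, haxFx⟩ haxz
    have hayE : ay ∈ E := hElow z hzE ay ⟨Fy, hFy, hayFy⟩ hayz
    exact ⟨z, hzE, (hFxkey ax ⟨haxE, haxFx⟩).trans haxz,
      (hFykey ay ⟨hayE, hayFy⟩).trans hayz⟩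
  · obtain ⟨z, hzE, hzF⟩ := hEhit F hF'
    exact ⟨z, hzE, subset_up' F hzF⟩

lemma finWayBelow_mono {F : Set L} {x y : L} (h : finWayBelow F x) (hxy : x ≤ y) :
    finWayBelow F y :=
  fun D hne hdir s hs hys => h D hne hdir s hs (hxy.trans hys)

lemma finWayBelow_nonempty {F : Set L} {x : L} (h : finWayBelow F x) : F.Nonempty := by
  obtain ⟨z, hz, f, hfF, -⟩ :=
    h {x} ⟨x, rfl⟩ (directedOn_singleton' x) x isLUB_singleton (le_refl x)
  exact ⟨f, hfF⟩

end Aux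

/-- Every quasicontinuous dcpo has weak one-step closure. -/
theorem quasicontinuous_dcpo_hasWeakOneStepClosure {L : Type*} [PartialOrder L]
    (hdcpo : IsDcpo L) (hqc : QuasicontinuousPoset L) :
    HasWeakOneStepClosure L := by
  classical
  intro A
  -- A ⊆ weakOneStep A
  have hsub : A ⊆ weakOneStep A := by
    intro a ha
    refine ⟨{a}, ?_, ⟨a, rfl⟩, directedOn_singleton' a, a, isLUB_singleton, le_refl a⟩
    intro x hx
    rw [Set.mem_singleton_iff] at hx
    exact ⟨a, ha, le_of_eq hx⟩
  -- weakOneStep A is a lower set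
  have hlow : IsLowerSet (weakOneStep A) := by
    intro a b hba ha
    obtain ⟨D, h1, h2, h3, y, h4, h5⟩ := ha
    exact ⟨D, h1, h2, h3, y, h4, hba.trans h5⟩
  -- weakOneStep A is closed under directed sups
  have hdsc : DirSupClosed (weakOneStep A) := by
    intro E hEsub hEne hEdir s hlub
    obtain ⟨hfne, hfdir, hfup⟩ := hqc s
    -- the auxiliary family 𝔊
    set GG : Set (Set L) :=
      {H | ∃ G : Set L, (G.Finite ∧ finWayBelow G s) ∧ ∃ φ : L → Set L,
        (∀ g ∈ G, (φ g).Finite ∧ finWayBelow (φ g) g) ∧ H = ⋃ g ∈ G, φ g} with hGGdef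
    have hGmem : ∀ {G : Set L} {φ : L → Set L}, G.Finite → finWayBelow G s →
        (∀ g ∈ G, (φ g).Finite ∧ finWayBelow (φ g) g) →
        (⋃ g ∈ G, φ g) ∈ GG := by
      intro G φ hGf hGw hφ
      exact ⟨G, ⟨hGf, hGw⟩, φ, hφ, rfl⟩
    have hGfin : ∀ H ∈ GG, H.Finite ∧ H.Nonempty := by
      rintro H ⟨G, ⟨hGf, hGw⟩, φ, hφ, rfl⟩
      constructor
      · exact hGf.biUnion (fun g hg => (hφ g hg).1)
      · obtain ⟨g, hg⟩ := finWayBelow_nonempty hGw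
        obtain ⟨f, hf⟩ := finWayBelow_nonempty (hφ g hg).2
        exact ⟨f, mem_biUnion hg hf⟩
    have hup_biUnion : ∀ (G : Set L) (φ : L → Set L) (x : L),
        x ∈ up (⋃ g ∈ G, φ g) → ∃ g ∈ G, x ∈ up (φ g) := by
      rintro G φ x ⟨h, hh, hhx⟩
      simp only [mem_iUnion] at hh
      obtain ⟨g, hg, hhg⟩ := hh
      exact ⟨g, hg, h, hhg, hhx⟩
    have hGdir : DirectedOn (fun H K => up K ⊆ up H) GG := by
      rintro H₁ ⟨G₁, ⟨hG₁f, hG₁w⟩, φ₁, hφ₁, rfl⟩ H₂ ⟨G₂, ⟨hG₂f, hG₂w⟩, φ₂, hφ₂, rfl⟩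
      obtain ⟨G₃, hG₃, hG₃₁, hG₃₂⟩ := hfdir G₁ ⟨hG₁f, hG₁w⟩ G₂ ⟨hG₂f, hG₂w⟩
      have hex : ∀ g ∈ G₃, ∃ F : Set L, ((F.Finite ∧ finWayBelow F g) ∧
          up F ⊆ up (⋃ g ∈ G₁, φ₁ g)) ∧ up F ⊆ up (⋃ g ∈ G₂, φ₂ g) := by
        intro g hg
        obtain ⟨g₁, hg₁, hg₁g⟩ := hG₃₁ (subset_up' G₃ hg)
        obtain ⟨g₂, hg₂, hg₂g⟩ := hG₃₂ (subset_up' G₃ hg)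
        have h1 : (φ₁ g₁).Finite ∧ finWayBelow (φ₁ g₁) g :=
          ⟨(hφ₁ g₁ hg₁).1, finWayBelow_mono (hφ₁ g₁ hg₁).2 hg₁g⟩
        have h2 : (φ₂ g₂).Finite ∧ finWayBelow (φ₂ g₂) g :=
          ⟨(hφ₂ g₂ hg₂).1, finWayBelow_mono (hφ₂ g₂ hg₂).2 hg₂g⟩
        obtain ⟨F, hF, hFa, hFb⟩ := (hqc g).2.1 (φ₁ g₁) h1 (φ₂ g₂) h2
        exact ⟨F, ⟨hF, hFa.trans (up_mono' (subset_biUnion_of_mem hg₁))⟩,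
          hFb.trans (up_mono' (subset_biUnion_of_mem hg₂))⟩
      choose! φ₃ hφ₃ using hex
      refine ⟨⋃ g ∈ G₃, φ₃ g, hGmem hG₃.1 hG₃.2 (fun g hg => (hφ₃ g hg).1.1), ?_, ?_⟩
      · intro x hx
        obtain ⟨g, hg, hxg⟩ := hup_biUnion _ _ _ hx
        exact (hφ₃ g hg).1.2 hxg
      · intro x hx
        obtain ⟨g, hg, hxg⟩ := hup_biUnion _ _ _ hx
        exact (hφ₃ g hg).2 hxg
    -- intersection of the up-closures of members of 𝔊 is contained in ↑s
    have hGcap : ∀ x : L, (∀ H ∈ GG, x ∈ up H) → s ≤ x := by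
      intro x hx
      have hxs : x ∈ up ({s} : Set L) := by
        rw [hfup]
        refine mem_iInter₂.mpr ?_
        intro G hG
        by_contra hxG
        have hex : ∀ g ∈ G, ∃ F : Set L, (F.Finite ∧ finWayBelow F g) ∧ x ∉ up F := by
          intro g hg
          have hxg : x ∉ up ({g} : Set L) := by
            rintro ⟨g', hg', hgx⟩
            rw [mem_singleton_iff] at hg'
            subst hg'
            exact hxG ⟨g', hg, hgx⟩
          rw [(hqc g).2.2] at hxg
          by_contra hcon
          push_neg at hcon
          exact hxg (mem_iInter₂.mpr fun F hF => hcon F hF)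
        choose! φ hφ using hex
        have hH := hx _ (hGmem hG.1 hG.2 (fun g hg => (hφ g hg).1))
        obtain ⟨g, hg, hxφ⟩ := hup_biUnion _ _ _ hH
        exact (hφ g hg).2 hxφ
      obtain ⟨s', hs', hsx⟩ := hxs
      rw [mem_singleton_iff] at hs'
      subst hs'
      exact hsx
    -- every member of 𝔊 meets ↓A
    have hGA : ∀ H ∈ GG, (H ∩ dw A).Nonempty := by
      rintro H ⟨G, ⟨hGf, hGw⟩, φ, hφ, rfl⟩
      obtain ⟨e, heE, g, hgG, hge⟩ := hGw E hEne hEdir s hlub (le_refl s)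
      obtain ⟨D', hD'A, hD'ne, hD'dir, y, hy, hey⟩ := hEsub heE
      obtain ⟨d, hdD', f, hfφ, hfd⟩ := (hφ g hgG).2 D' hD'ne hD'dir y hy (hge.trans hey)
      obtain ⟨a, haA, hda⟩ := hD'A hdD'
      exact ⟨f, mem_biUnion hgG hfφ, a, haA, hfd.trans hda⟩
    -- the final family: members of 𝔊 intersected with ↓A
    set HH : Set (Set L) := {K | ∃ H ∈ GG, K = H ∩ dw A} with hHHdef
    have hGne : GG.Nonempty := by
      obtain ⟨G, hG⟩ := hfne
      have hex : ∀ g ∈ G, ∃ F : Set L, F.Finite ∧ finWayBelow F g := fun g _ => (hqc g).1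
      choose! φ hφ using hex
      exact ⟨_, hGmem hG.1 hG.2 hφ⟩
    have hHne : HH.Nonempty := by
      obtain ⟨H, hH⟩ := hGne
      exact ⟨H ∩ dw A, H, hH, rfl⟩
    have hHfin : ∀ K ∈ HH, K.Finite ∧ K.Nonempty := by
      rintro K ⟨H, hH, rfl⟩
      exact ⟨((hGfin H hH).1).subset inter_subset_left, hGA H hH⟩
    have hupinter : ∀ (H₁ H₂ : Set L), up H₂ ⊆ up H₁ →
        up (H₂ ∩ dw A) ⊆ up (H₁ ∩ dw A) := by
      rintro H₁ H₂ h21 x ⟨h, ⟨hhH, hhA⟩, hhx⟩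
      obtain ⟨f, hfH, hfh⟩ := h21 (subset_up' _ hhH)
      obtain ⟨a, haA, hha⟩ := hhA
      exact ⟨f, ⟨hfH, a, haA, hfh.trans hha⟩, hfh.trans hhx⟩
    have hHdir : DirectedOn (fun F G => up G ⊆ up F) HH := by
      rintro K₁ ⟨H₁, hH₁, rfl⟩ K₂ ⟨H₂, hH₂, rfl⟩
      obtain ⟨H₃, hH₃, h31, h32⟩ := hGdir H₁ hH₁ H₂ hH₂
      exact ⟨H₃ ∩ dw A, ⟨H₃, hH₃, rfl⟩, hupinter _ _ h31, hupinter _ _ h32⟩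
    obtain ⟨D, hDsub, hDne, hDdir, hDhit⟩ := rudin hHne hHfin hHdir
    have hDA : D ⊆ dw A := by
      intro x hx
      obtain ⟨K, ⟨H, hH, rfl⟩, hxK⟩ := hDsub hx
      exact hxK.2
    obtain ⟨d, hd⟩ := hdcpo D hDne hDdir
    have hsd : s ≤ d := by
      refine hGcap d ?_
      intro H hH
      obtain ⟨z, hzD, f, ⟨hfH, -⟩, hfz⟩ := hDhit _ ⟨H, hH, rfl⟩
      exact ⟨f, hfH, hfz.trans (hd.1 hzD)⟩
    exact ⟨D, hDA, hDne, hDdir, d, hd, hsd⟩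
  -- assemble via the Scott topology
  unfold scottCl
  letI : TopologicalSpace L := Topology.scott L Set.univ
  haveI : Topology.IsScott L Set.univ := ⟨rfl⟩
  have hclosed_iff : ∀ s : Set L, IsClosed s ↔ IsLowerSet s ∧ DirSupClosed s := fun s =>
    Topology.IsScott.isClosed_iff_isLowerSet_and_dirSupClosed
  apply subset_antisymm
  · exact closure_minimal hsub ((hclosed_iff _).mpr ⟨hlow, hdsc⟩)
  · rintro x ⟨D, hDA, hDne, hDdir, y, hy, hxy⟩
    obtain ⟨hclLow, hclSup⟩ := (hclosed_iff (closure A)).mp isClosed_closure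
    have hDcl : D ⊆ closure A := by
      intro z hz
      obtain ⟨a, haA, hza⟩ := hDA hz
      exact hclLow hza (subset_closure haA)
    exact hclLow hxy (hclSup hDcl hDne hDdir hy)
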